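/- arXiv:2111.01392 — 2 statements merged into one kernel-verified Lean document; each statement's English description precedes it below -/
import Mathlib

section
/- Let A ∈ ℝ^{m×K}, B ∈ ℝ^{K×L}, C ∈ ℝ^{L×n} with K ≤ L, rank(B) = K, and m ≥ K, n ≥ L. Then the K-th largest singular value of the product satisfies σ_K(ABC) ≥ σ_K(A)·σ_K(B)·σ_L(C), where σ_j denotes the j-th largest singular value. -/
open Matrix

/-- The `j`-th largest entry of a tuple (`j` indexed from `0`). -/
noncomputable def kthLargest {n : ℕ} (f : Fin n → ℝ) (j : Fin n) : ℝ :=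
  f (Tuple.sort f j.rev)

/-- The `j`-th largest singular value (`j` indexed from `0`) of a real matrix,
defined as the square root of the `j`-th largest eigenvalue of `Mᵀ * M`. -/
noncomputable def singularValue {m n : ℕ} (M : Matrix (Fin m) (Fin n) ℝ) (j : Fin n) : ℝ :=
  Real.sqrt (kthLargest (show (Mᵀ * M).IsHermitian by
    simpa [Matrix.conjTranspose_eq_transpose_of_trivial] using
      Matrix.isHermitian_conjTranspose_mul_self M).eigenvalues j)

namespace StmtAux

open Finset

/-! ### Combinatorial lemmas about `kthLargest` -/

lemma card_filter_perm {n : ℕ} (σ : Equiv.Perm (Fin n)) (P : Fin n → Prop) [DecidablePred P] :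
    (univ.filter fun p => P (σ p)).card = (univ.filter P).card := by
  apply Finset.card_bij (fun p _ => σ p)
  · intro a ha; simp at ha ⊢; exact ha
  · intro a _ b _ h; exact σ.injective h
  · intro b hb; exact ⟨σ.symm b, by simpa using hb, by simp⟩

lemma kthLargest_min_le {n : ℕ} (f : Fin n → ℝ) (hn : 0 < n) (i : Fin n) :
    kthLargest f ⟨n - 1, by omega⟩ ≤ f i := by
  have h0 : (⟨n - 1, by omega⟩ : Fin n).rev = ⟨0, hn⟩ := by
    ext; simp [Fin.val_rev]; omega
  rw [kthLargest, h0]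
  have := Tuple.monotone_sort f (a := ⟨0, hn⟩) (b := (Tuple.sort f).symm i)
    (Fin.le_def.2 (Nat.zero_le _))
  simpa using this

lemma card_filter_le_of_kthLargest_lt {n : ℕ} (f : Fin n → ℝ) (j : Fin n) {c : ℝ}
    (h : kthLargest f j < c) :
    (univ.filter fun i => c ≤ f i).card ≤ j.val := by
  rw [← card_filter_perm (Tuple.sort f) (fun i => c ≤ f i)]
  have hsub : (univ.filter fun p => c ≤ f (Tuple.sort f p)) ⊆ Finset.Ioi j.rev := by
    intro p hp
    simp only [mem_filter, mem_univ, true_and] at hp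
    rw [Finset.mem_Ioi]
    by_contra hle
    push_neg at hle
    exact absurd (le_trans hp (Tuple.monotone_sort f hle)) (not_le.2 h)
  calc (univ.filter fun p => c ≤ f (Tuple.sort f p)).card ≤ (Finset.Ioi j.rev).card :=
        Finset.card_le_card hsub
    _ = j.val := by rw [Fin.card_Ioi]; have := j.is_lt; have := Fin.val_rev j; omega

lemma kthLargest_card_ge {n : ℕ} (f : Fin n → ℝ) (j : Fin n) :
    j.val + 1 ≤ (univ.filter fun i => kthLargest f j ≤ f i).card := by
  rw [← card_filter_perm (Tuple.sort f) (fun i => kthLargest f j ≤ f i)]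
  have hsub : Finset.Ici j.rev ⊆ (univ.filter fun p => kthLargest f j ≤ f (Tuple.sort f p)) := by
    intro p hp
    rw [Finset.mem_Ici] at hp
    simp only [mem_filter, mem_univ, true_and]
    exact Tuple.monotone_sort f hp
  calc j.val + 1 = (Finset.Ici j.rev).card := by
        rw [Fin.card_Ici]; have := j.is_lt; have := Fin.val_rev j; omega
    _ ≤ _ := Finset.card_le_card hsub

lemma kthLargest_struct {n K : ℕ} (f : Fin n → ℝ)
    (hK : 0 < K) (hKn : K ≤ n)
    (hcard : (univ.filter fun i => f i ≠ 0).card ≤ K)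
    (hpos : 0 < kthLargest f ⟨K - 1, by omega⟩) :
    ∀ i, f i = 0 ∨ kthLargest f ⟨K - 1, by omega⟩ ≤ f i := by
  set c := kthLargest f ⟨K - 1, by omega⟩ with hc
  have hrev : (⟨K - 1, by omega⟩ : Fin n).rev = ⟨n - K, by omega⟩ := by
    ext; simp [Fin.val_rev]; omega
  have hmono : ∀ p : Fin n, (⟨n - K, by omega⟩ : Fin n) ≤ p → c ≤ f (Tuple.sort f p) := by
    intro p hp
    rw [hc, kthLargest, hrev]
    exact Tuple.monotone_sort f hp
  have hzero : ∀ p : Fin n, p < (⟨n - K, by omega⟩ : Fin n) → f (Tuple.sort f p) = 0 := by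
    intro p hp
    by_contra hne
    have h1 : insert p (Finset.Ici (⟨n - K, by omega⟩ : Fin n)) ⊆
        (univ.filter fun q => f (Tuple.sort f q) ≠ 0) := by
      intro q hq
      simp only [Finset.mem_insert, Finset.mem_Ici] at hq
      simp only [mem_filter, mem_univ, true_and]
      rcases hq with rfl | hq
      · exact hne
      · exact ne_of_gt (lt_of_lt_of_le hpos (hmono q hq))
    have h2 : (insert p (Finset.Ici (⟨n - K, by omega⟩ : Fin n))).card = K + 1 := by
      rw [Finset.card_insert_of_notMem (by simp [Finset.mem_Ici, not_le, hp]), Fin.card_Ici]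
      simp; omega
    have h3 := Finset.card_le_card h1
    rw [h2, card_filter_perm (Tuple.sort f) (fun i => f i ≠ 0)] at h3
    omega
  intro i
  rcases le_or_gt (⟨n - K, by omega⟩ : Fin n) ((Tuple.sort f).symm i) with hle | hlt
  · right; have := hmono _ hle; simpa using this
  · left; have := hzero _ hlt; simpa using this

/-! ### Spectral coordinates -/

noncomputable def Umat {q : ℕ} {H : Matrix (Fin q) (Fin q) ℝ} (hH : H.IsHermitian) :
    Matrix (Fin q) (Fin q) ℝ := hH.eigenvectorUnitary

lemma hUUs {q : ℕ} {H : Matrix (Fin q) (Fin q) ℝ} (hH : H.IsHermitian) :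
    Umat hH * star (Umat hH) = 1 := by
  simpa [Umat] using (Matrix.mem_unitaryGroup_iff).mp (hH.eigenvectorUnitary).2

lemma dot_self_nonneg {q : ℕ} (v : Fin q → ℝ) : 0 ≤ v ⬝ᵥ v :=
  Finset.sum_nonneg fun i _ => mul_self_nonneg _

lemma dot_self_mul {q p : ℕ} (M : Matrix (Fin p) (Fin q) ℝ) (x : Fin q → ℝ) :
    x ⬝ᵥ ((Mᵀ * M) *ᵥ x) = (M *ᵥ x) ⬝ᵥ (M *ᵥ x) := by
  rw [← mulVec_mulVec, dotProduct_mulVec, vecMul_transpose]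

lemma dot_coords {q : ℕ} {H : Matrix (Fin q) (Fin q) ℝ} (hH : H.IsHermitian) (x : Fin q → ℝ) :
    x ⬝ᵥ x = ∑ i, (star (Umat hH) *ᵥ x) i ^ 2 := by
  have h1 : ∑ i, (star (Umat hH) *ᵥ x) i ^ 2
      = (star (Umat hH) *ᵥ x) ⬝ᵥ (star (Umat hH) *ᵥ x) := by
    simp [dotProduct, pow_two]
  have h2 : (star (Umat hH))ᵀ = Umat hH := by
    rw [star_eq_conjTranspose, conjTranspose_eq_transpose_of_trivial, transpose_transpose]
  rw [h1, ← dot_self_mul (star (Umat hH)) x, h2, hUUs hH, one_mulVec]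

lemma quad_coords {q : ℕ} {H : Matrix (Fin q) (Fin q) ℝ} (hH : H.IsHermitian) (x : Fin q → ℝ) :
    x ⬝ᵥ (H *ᵥ x) = ∑ i, hH.eigenvalues i * (star (Umat hH) *ᵥ x) i ^ 2 := by
  conv_lhs => rw [hH.spectral_theorem]
  have hid : (RCLike.ofReal ∘ hH.eigenvalues : Fin q → ℝ) = hH.eigenvalues := by
    ext i; simp
  rw [hid, Unitary.conjStarAlgAut_apply, ← mulVec_mulVec, ← mulVec_mulVec, dotProduct_mulVec]
  have hxU : x ᵥ* (Umat hH : Matrix (Fin q) (Fin q) ℝ) = star (Umat hH) *ᵥ x := by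
    rw [star_eq_conjTranspose, conjTranspose_eq_transpose_of_trivial, mulVec_transpose]
  rw [show ((hH.eigenvectorUnitary : Matrix (Fin q) (Fin q) ℝ)) = Umat hH from rfl, hxU]
  simp [dotProduct, mulVec_diagonal, pow_two]
  ring_nf
  congr 1; ext i; ring

lemma recover_x {q : ℕ} {H : Matrix (Fin q) (Fin q) ℝ} (hH : H.IsHermitian) (x : Fin q → ℝ) :
    Umat hH *ᵥ (star (Umat hH) *ᵥ x) = x := by
  rw [mulVec_mulVec, hUUs hH, one_mulVec]

lemma coord_eq_col_dot {q : ℕ} {H : Matrix (Fin q) (Fin q) ℝ} (hH : H.IsHermitian)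
    (x : Fin q → ℝ) (i : Fin q) :
    (star (Umat hH) *ᵥ x) i = (fun j => Umat hH j i) ⬝ᵥ x := by
  simp [mulVec, dotProduct, star_eq_conjTranspose, conjTranspose_apply, Umat]

lemma mulVec_col_eig {q : ℕ} {H : Matrix (Fin q) (Fin q) ℝ} (hH : H.IsHermitian) (i : Fin q) :
    H *ᵥ (fun j => Umat hH j i) = hH.eigenvalues i • (fun j => Umat hH j i) := by
  have : (fun j => Umat hH j i) = ⇑(hH.eigenvectorBasis i) := by
    ext j; simp [Umat, Matrix.IsHermitian.eigenvectorUnitary_apply]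
  rw [this]
  exact hH.mulVec_eigenvectorBasis i

/-! ### Quadratic form bounds -/

lemma quad_min {q : ℕ} {H : Matrix (Fin q) (Fin q) ℝ} (hH : H.IsHermitian) {c : ℝ}
    (hstruct : ∀ i, c ≤ hH.eigenvalues i) (v : Fin q → ℝ) :
    c * (v ⬝ᵥ v) ≤ v ⬝ᵥ (H *ᵥ v) := by
  rw [quad_coords hH v, dot_coords hH v, Finset.mul_sum]
  exact Finset.sum_le_sum fun i _ => mul_le_mul_of_nonneg_right (hstruct i) (sq_nonneg _)

lemma coord_zero_of_eig_zero {p q : ℕ} (M : Matrix (Fin p) (Fin q) ℝ)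
    (hH : (Mᴴ * M).IsHermitian) (i : Fin q) (hi : hH.eigenvalues i = 0)
    (w : Fin p → ℝ) : (star (Umat hH) *ᵥ (Mᵀ *ᵥ w)) i = 0 := by
  have hcol := mulVec_col_eig hH i
  rw [hi, zero_smul] at hcol
  have hMcol : M *ᵥ (fun j => Umat hH j i) = 0 := by
    have h0 : (fun j => Umat hH j i) ⬝ᵥ ((Mᴴ * M) *ᵥ (fun j => Umat hH j i)) = 0 := by
      rw [hcol]; simp
    apply dotProduct_self_eq_zero.mp
    rw [← dot_self_mul, ← conjTranspose_eq_transpose_of_trivial M]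
    exact h0
  rw [coord_eq_col_dot, dotProduct_mulVec, vecMul_transpose, hMcol, zero_dotProduct]

lemma quad_lower {p q : ℕ} (M : Matrix (Fin p) (Fin q) ℝ) (hH : (Mᴴ * M).IsHermitian) {c : ℝ}
    (hstruct : ∀ i, hH.eigenvalues i = 0 ∨ c ≤ hH.eigenvalues i) (w : Fin p → ℝ) :
    c * ((Mᵀ *ᵥ w) ⬝ᵥ (Mᵀ *ᵥ w)) ≤ (Mᵀ *ᵥ w) ⬝ᵥ ((Mᴴ * M) *ᵥ (Mᵀ *ᵥ w)) := by
  rw [quad_coords hH (Mᵀ *ᵥ w), dot_coords hH (Mᵀ *ᵥ w), Finset.mul_sum]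
  apply Finset.sum_le_sum
  intro i _
  rcases hstruct i with h0 | hge
  · rw [h0, coord_zero_of_eig_zero M hH i h0 w]; simp
  · exact mul_le_mul_of_nonneg_right hge (sq_nonneg _)

lemma cf_lower {q : ℕ} {H : Matrix (Fin q) (Fin q) ℝ} (hH : H.IsHermitian) {c : ℝ}
    (K : ℕ) (hK : 0 < K) (hKq : K ≤ q) (W : Submodule ℝ (Fin q → ℝ))
    (hW : K ≤ Module.finrank ℝ W)
    (hform : ∀ x ∈ W, c * (x ⬝ᵥ x) ≤ x ⬝ᵥ (H *ᵥ x)) :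
    c ≤ kthLargest hH.eigenvalues ⟨K - 1, by omega⟩ := by
  by_contra hlt
  push_neg at hlt
  set μ := hH.eigenvalues with hμ
  have hcard : (univ.filter fun i => c ≤ μ i).card ≤ K - 1 :=
    card_filter_le_of_kthLargest_lt μ _ hlt
  set S := univ.filter fun i => c ≤ μ i with hS
  let T : (Fin q → ℝ) →ₗ[ℝ] (S → ℝ) :=
    LinearMap.pi (fun i => (LinearMap.proj (i : Fin q)).comp (mulVecLin (star (Umat hH))))
  have hrange : Module.finrank ℝ (LinearMap.range T) ≤ K - 1 := by
    calc Module.finrank ℝ (LinearMap.range T) ≤ Module.finrank ℝ (S → ℝ) :=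
          (LinearMap.range T).finrank_le
      _ = S.card := by simp [Module.finrank_pi]
      _ ≤ K - 1 := hcard
  have hker : q - (K - 1) ≤ Module.finrank ℝ (LinearMap.ker T) := by
    have h := LinearMap.finrank_range_add_finrank_ker T
    rw [Module.finrank_pi] at h
    simp only [Fintype.card_fin] at h
    omega
  have hdim : 0 < Module.finrank ℝ (W ⊓ LinearMap.ker T : Submodule ℝ (Fin q → ℝ)) := by
    have h1 := Submodule.finrank_sup_add_finrank_inf_eq W (LinearMap.ker T)
    have h2 : Module.finrank ℝ (W ⊔ LinearMap.ker T : Submodule ℝ (Fin q → ℝ)) ≤ q := by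
      have h3 := (W ⊔ LinearMap.ker T).finrank_le
      rwa [Module.finrank_pi, Fintype.card_fin] at h3
    omega
  have hne : (W ⊓ LinearMap.ker T : Submodule ℝ (Fin q → ℝ)) ≠ ⊥ := by
    intro h; rw [h, finrank_bot] at hdim; exact lt_irrefl 0 hdim
  obtain ⟨x, hx, hx0⟩ := Submodule.exists_mem_ne_zero_of_ne_bot hne
  obtain ⟨hxW, hxK⟩ := hx
  have hyS : ∀ i : Fin q, i ∈ S → (star (Umat hH) *ᵥ x) i = 0 := by
    intro i hi
    have h5 := LinearMap.mem_ker.mp hxK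
    have h4 := congrFun h5 ⟨i, hi⟩
    simpa [T, mulVecLin_apply] using h4
  have hy0 : ∃ i, (star (Umat hH) *ᵥ x) i ≠ 0 := by
    by_contra hall
    push_neg at hall
    apply hx0
    have h6 := recover_x hH x
    rw [show (star (Umat hH) *ᵥ x) = 0 from funext hall, mulVec_zero] at h6
    exact h6.symm
  obtain ⟨i₀, hi₀⟩ := hy0
  have hi₀S : i₀ ∉ S := fun h => hi₀ (hyS i₀ h)
  have hstrict : x ⬝ᵥ (H *ᵥ x) < c * (x ⬝ᵥ x) := by
    rw [quad_coords hH x, dot_coords hH x, Finset.mul_sum]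
    apply Finset.sum_lt_sum
    · intro i _
      by_cases hiS : i ∈ S
      · rw [hyS i hiS]; simp
      · have : μ i < c := by
          by_contra hge; exact hiS (by simp [hS, not_lt.mp hge])
        exact mul_le_mul_of_nonneg_right this.le (sq_nonneg _)
    · refine ⟨i₀, Finset.mem_univ _, ?_⟩
      have hμlt : μ i₀ < c := by
        by_contra hge; exact hi₀S (by simp [hS, not_lt.mp hge])
      exact mul_lt_mul_of_pos_right hμlt (by positivity)
  exact absurd (hform x hxW) (not_le.mpr hstrict)

end StmtAux

theorem stmt_12 {m n K L : ℕ}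
    (A : Matrix (Fin m) (Fin K) ℝ) (B : Matrix (Fin K) (Fin L) ℝ)
    (C : Matrix (Fin L) (Fin n) ℝ)
    (hK : 0 < K) (hKL : K ≤ L) (hrank : B.rank = K)
    (hmK : K ≤ m) (hnL : L ≤ n) :
    singularValue A ⟨K - 1, by omega⟩ * singularValue B ⟨K - 1, by omega⟩ *
        singularValue C ⟨L - 1, by omega⟩
      ≤ singularValue (A * B * C) ⟨K - 1, by omega⟩ := by
  classical
  open StmtAux Finset in
  simp only [singularValue]
  set hA := (show (Aᵀ * A).IsHermitian by
    simpa [Matrix.conjTranspose_eq_transpose_of_trivial] using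
      Matrix.isHermitian_conjTranspose_mul_self A) with hAdef
  set hB := (show (Bᵀ * B).IsHermitian by
    simpa [Matrix.conjTranspose_eq_transpose_of_trivial] using
      Matrix.isHermitian_conjTranspose_mul_self B) with hBdef
  set hC := (show (Cᵀ * C).IsHermitian by
    simpa [Matrix.conjTranspose_eq_transpose_of_trivial] using
      Matrix.isHermitian_conjTranspose_mul_self C) with hCdef
  set hD := (show ((A * B * C)ᵀ * (A * B * C)).IsHermitian by
    simpa [Matrix.conjTranspose_eq_transpose_of_trivial] using
      Matrix.isHermitian_conjTranspose_mul_self (A * B * C)) with hDdef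
  set a := kthLargest hA.eigenvalues ⟨K - 1, by omega⟩ with ha
  set b := kthLargest hB.eigenvalues ⟨K - 1, by omega⟩ with hb
  set c := kthLargest hC.eigenvalues ⟨L - 1, by omega⟩ with hc
  set d := kthLargest hD.eigenvalues ⟨K - 1, by omega⟩ with hd
  have hL : 0 < L := by omega
  have hKn : K ≤ n := by omega
  -- trivial cases
  rcases le_or_gt a 0 with h0a | hapos
  · rw [Real.sqrt_eq_zero'.mpr h0a]
    simpa using Real.sqrt_nonneg d
  rcases le_or_gt b 0 with h0b | hbpos
  · rw [Real.sqrt_eq_zero'.mpr h0b]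
    simpa using Real.sqrt_nonneg d
  rcases le_or_gt c 0 with h0c | hcpos
  · rw [Real.sqrt_eq_zero'.mpr h0c]
    simpa using Real.sqrt_nonneg d
  -- structure of the eigenvalues of Bᵀ*B
  have hcardB : (univ.filter fun i => hB.eigenvalues i ≠ 0).card = K := by
    have h1 := hB.rank_eq_card_non_zero_eigs
    rw [Fintype.card_subtype] at h1
    have h2 : (Bᵀ * B).rank = B.rank := by
      exact B.rank_transpose_mul_self
    omega
  have hstructB : ∀ i, hB.eigenvalues i = 0 ∨ b ≤ hB.eigenvalues i :=
    kthLargest_struct hB.eigenvalues hK hKL (le_of_eq hcardB) hbpos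
  have hrankCle : C.rank ≤ L := by simpa using Matrix.rank_le_card_height C
  have hcardC : (univ.filter fun i => hC.eigenvalues i ≠ 0).card ≤ L := by
    have h1 := hC.rank_eq_card_non_zero_eigs
    rw [Fintype.card_subtype] at h1
    have h2 : (Cᵀ * C).rank = C.rank := by
      exact C.rank_transpose_mul_self
    omega
  have hstructC : ∀ i, hC.eigenvalues i = 0 ∨ c ≤ hC.eigenvalues i :=
    kthLargest_struct hC.eigenvalues hL hnL hcardC hcpos
  -- C has full row rank, so C * Cᵀ is invertible
  have hrankC : C.rank = L := by
    refine le_antisymm hrankCle ?_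
    have h5 := kthLargest_card_ge hC.eigenvalues ⟨L - 1, by omega⟩
    have hsub : (univ.filter fun i => c ≤ hC.eigenvalues i) ⊆
        (univ.filter fun i => hC.eigenvalues i ≠ 0) := by
      intro i hi
      simp only [mem_filter, mem_univ, true_and] at hi ⊢
      exact ne_of_gt (lt_of_lt_of_le hcpos hi)
    have h6 := Finset.card_le_card hsub
    have h1 := hC.rank_eq_card_non_zero_eigs
    rw [Fintype.card_subtype] at h1
    have h2 : (Cᵀ * C).rank = C.rank := by
      exact C.rank_transpose_mul_self
    rw [← hc] at h5
    have hval : ((⟨L - 1, by omega⟩ : Fin n) : ℕ) = L - 1 := rfl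
    rw [hval] at h5
    calc L = L - 1 + 1 := by omega
      _ ≤ (univ.filter fun i => c ≤ hC.eigenvalues i).card := h5
      _ ≤ (univ.filter fun i => hC.eigenvalues i ≠ 0).card := h6
      _ = C.rank := by rw [← h1, h2]
  have hrankG : (C * Cᵀ).rank = L := by rw [rank_self_mul_transpose]; exact hrankC
  have hGtop : LinearMap.range (C * Cᵀ).mulVecLin = ⊤ := by
    apply Submodule.eq_top_of_finrank_eq
    rw [Module.finrank_pi, Fintype.card_fin]
    exact hrankG
  have hGsurj : Function.Surjective (C * Cᵀ).mulVec := by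
    intro y
    obtain ⟨x, hx⟩ := LinearMap.range_eq_top.mp hGtop y
    exact ⟨x, hx⟩
  have hGdet : IsUnit (C * Cᵀ).det :=
    (Matrix.isUnit_iff_isUnit_det _).mp (Matrix.mulVec_surjective_iff_isUnit.mp hGsurj)
  set P := Cᵀ * (C * Cᵀ)⁻¹ * Bᵀ with hP
  have hCP : C * P = Bᵀ := by
    rw [hP, Matrix.mul_assoc (Cᵀ) _ (Bᵀ), ← Matrix.mul_assoc C (Cᵀ) _,
      ← Matrix.mul_assoc (C * Cᵀ) _ (Bᵀ), Matrix.mul_nonsing_inv _ hGdet, Matrix.one_mul]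
  have hGT : (C * Cᵀ)ᵀ = C * Cᵀ := by rw [Matrix.transpose_mul, Matrix.transpose_transpose]
  have hGinvT : ((C * Cᵀ)⁻¹)ᵀ = (C * Cᵀ)⁻¹ := by rw [Matrix.transpose_nonsing_inv, hGT]
  have hPt : Pᵀ = B * ((C * Cᵀ)⁻¹ * C) := by
    rw [hP, Matrix.transpose_mul, Matrix.transpose_mul, Matrix.transpose_transpose,
      Matrix.transpose_transpose, hGinvT]
  have hPtCt : Pᵀ * Cᵀ = B := by
    rw [hPt, Matrix.mul_assoc B _ (Cᵀ), Matrix.mul_assoc _ C (Cᵀ),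
      Matrix.nonsing_inv_mul _ hGdet, Matrix.mul_one]
  have hrankP : K ≤ P.rank := by
    have h7 := Matrix.rank_mul_le_left Pᵀ Cᵀ
    rw [hPtCt, Matrix.rank_transpose] at h7
    omega
  set W := LinearMap.range P.mulVecLin with hWdef
  have hWrank : K ≤ Module.finrank ℝ W := hrankP
  have hform : ∀ x ∈ W, (a * b * c) * (x ⬝ᵥ x)
      ≤ x ⬝ᵥ (((A * B * C)ᴴ * (A * B * C)) *ᵥ x) := by
    intro x hx
    obtain ⟨w, hw⟩ := hx
    rw [Matrix.mulVecLin_apply] at hw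
    subst hw
    have hxC : P *ᵥ w = Cᵀ *ᵥ (((C * Cᵀ)⁻¹ * Bᵀ) *ᵥ w) := by
      rw [hP, Matrix.mul_assoc, ← Matrix.mulVec_mulVec]
    have hCx : C *ᵥ (P *ᵥ w) = Bᵀ *ᵥ w := by
      rw [Matrix.mulVec_mulVec, hCP]
    have key1 : c * ((P *ᵥ w) ⬝ᵥ (P *ᵥ w))
        ≤ (C *ᵥ (P *ᵥ w)) ⬝ᵥ (C *ᵥ (P *ᵥ w)) := by
      have h9 := quad_lower C hC hstructC (((C * Cᵀ)⁻¹ * Bᵀ) *ᵥ w)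
      rw [conjTranspose_eq_transpose_of_trivial, dot_self_mul] at h9
      rwa [← hxC] at h9
    have key2 : b * ((C *ᵥ (P *ᵥ w)) ⬝ᵥ (C *ᵥ (P *ᵥ w)))
        ≤ (B *ᵥ (C *ᵥ (P *ᵥ w))) ⬝ᵥ (B *ᵥ (C *ᵥ (P *ᵥ w))) := by
      have h9 := quad_lower B hB hstructB w
      rw [conjTranspose_eq_transpose_of_trivial, dot_self_mul] at h9
      rwa [← hCx] at h9
    have key3 : a * ((B *ᵥ (C *ᵥ (P *ᵥ w))) ⬝ᵥ (B *ᵥ (C *ᵥ (P *ᵥ w))))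
        ≤ (A *ᵥ (B *ᵥ (C *ᵥ (P *ᵥ w)))) ⬝ᵥ (A *ᵥ (B *ᵥ (C *ᵥ (P *ᵥ w)))) := by
      have h8 : ∀ i, a ≤ hA.eigenvalues i := kthLargest_min_le hA.eigenvalues hK
      have h9 := quad_min hA h8 (B *ᵥ (C *ᵥ (P *ᵥ w)))
      rwa [dot_self_mul] at h9
    have hRHS : (P *ᵥ w) ⬝ᵥ (((A * B * C)ᴴ * (A * B * C)) *ᵥ (P *ᵥ w))
        = (A *ᵥ (B *ᵥ (C *ᵥ (P *ᵥ w)))) ⬝ᵥ (A *ᵥ (B *ᵥ (C *ᵥ (P *ᵥ w)))) := by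
      rw [conjTranspose_eq_transpose_of_trivial, dot_self_mul,
        ← Matrix.mulVec_mulVec, ← Matrix.mulVec_mulVec]
    rw [hRHS]
    calc (a * b * c) * ((P *ᵥ w) ⬝ᵥ (P *ᵥ w))
        = a * (b * (c * ((P *ᵥ w) ⬝ᵥ (P *ᵥ w)))) := by ring
      _ ≤ a * (b * ((C *ᵥ (P *ᵥ w)) ⬝ᵥ (C *ᵥ (P *ᵥ w)))) := by
          apply mul_le_mul_of_nonneg_left (mul_le_mul_of_nonneg_left key1 hbpos.le) hapos.le
      _ ≤ a * ((B *ᵥ (C *ᵥ (P *ᵥ w))) ⬝ᵥ (B *ᵥ (C *ᵥ (P *ᵥ w)))) :=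
          mul_le_mul_of_nonneg_left key2 hapos.le
      _ ≤ _ := key3
  have habc : a * b * c ≤ d := cf_lower hD K hK hKn W hWrank hform
  have hsplit : Real.sqrt (a * b * c) = Real.sqrt a * Real.sqrt b * Real.sqrt c := by
    rw [Real.sqrt_mul (mul_nonneg hapos.le hbpos.le), Real.sqrt_mul hapos.le]
  rw [← hsplit]
  exact Real.sqrt_le_sqrt habc
end

section
/- Let Ω = U_r Λ U_c' be a compact SVD with U_c'U_c = I_{K_r} and Λ invertible, and suppose Ω = Π_r P Π_c'. Then U_r = Π_r B_r with B_r := P Π_c' U_c Λ⁻¹; in particular, U_r(i,:) = U_r(j,:) whenever Π_r(i,:) = Π_r(j,:). -/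
open Matrix

theorem stmt_14 {nr nc Kr Kc : ℕ}
    (Ω : Matrix (Fin nr) (Fin nc) ℝ)
    (Ur : Matrix (Fin nr) (Fin Kr) ℝ) (lam : Fin Kr → ℝ)
    (Uc : Matrix (Fin nc) (Fin Kr) ℝ)
    (PPr : Matrix (Fin nr) (Fin Kr) ℝ) (P : Matrix (Fin Kr) (Fin Kc) ℝ)
    (PPc : Matrix (Fin nc) (Fin Kc) ℝ)
    (hUc : Ucᵀ * Uc = 1)
    (hΛ : IsUnit (Matrix.diagonal lam).det)
    (hSVD : Ω = Ur * Matrix.diagonal lam * Ucᵀ)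
    (hΩ : Ω = PPr * P * PPcᵀ) :
    Ur = PPr * (P * PPcᵀ * Uc * (Matrix.diagonal lam)⁻¹) ∧
    ∀ i j, PPr i = PPr j → Ur i = Ur j := by
  have key : Ur = PPr * (P * PPcᵀ * Uc * (Matrix.diagonal lam)⁻¹) := by
    have h1 : Ω * Uc * (Matrix.diagonal lam)⁻¹ = Ur := by
      rw [hSVD, Matrix.mul_assoc (Ur * Matrix.diagonal lam), hUc, Matrix.mul_one,
        Matrix.mul_assoc, Matrix.mul_nonsing_inv _ hΛ, Matrix.mul_one]
    rw [← h1, hΩ]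
    simp [Matrix.mul_assoc]
  refine ⟨key, fun i j hij => ?_⟩
  have : ∀ k, Ur i k = Ur j k := by
    intro k
    rw [key]
    simp only [Matrix.mul_apply]
    exact Finset.sum_congr rfl fun x _ => by rw [hij]
  exact funext this
end
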